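/- Fix M, n ≥ 2 and let 𝓡̃ ⊂ ℝ^{2M×n} be the set of block matrices whose top M×n block is ū⊗b for some ū ∈ ℝ^M and b ∈ ℝⁿ, and whose bottom M×n block has α-th column ∑_{β=1}^n v̄_{αβ}b_β where v̄_{αβ} = -v̄_{βα} ∈ ℝ^M (same b in both blocks). Then for every A ∈ ℝ^{2M×n} there exist at most 2n elements C₁, …, C_{2n} ∈ 𝓡̃ with A = ∑ᵢ Cᵢ and |Cᵢ| ≤ Λ|A| for a constant Λ depending only on M and n. -/

import Mathlib

/-- The set `𝓡̃ ⊂ ℝ^{2M×n}` of block matrices whose top block is `ū⊗b` and whose bottom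
block has `α`-th column `∑_β v̄_{αβ} b_β` with `v̄` an antisymmetric `ℝ^M`-valued array. -/
def RTilde (M n : ℕ) : Set ((Fin M → Fin n → ℝ) × (Fin M → Fin n → ℝ)) :=
  {C | ∃ (u : Fin M → ℝ) (b : Fin n → ℝ) (v : Fin n → Fin n → Fin M → ℝ),
    (∀ α β, v α β = -v β α) ∧
    (∀ i α, C.1 i α = u i * b α) ∧
    (∀ i α, C.2 i α = ∑ β, v α β i * b β)}

/-- Quantitative connectivity: there is `Λ = Λ(M,n) > 0` such that any
`A ∈ ℝ^{2M×n}` is a sum of at most `2n` elements of `𝓡̃`, each of norm at most `Λ|A|`. -/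
theorem RTilde_decomposition (M n : ℕ) (hM : 2 ≤ M) (hn : 2 ≤ n) :
    ∃ Λ : ℝ, 0 < Λ ∧
      ∀ A : (Fin M → Fin n → ℝ) × (Fin M → Fin n → ℝ),
        ∃ C : Fin (2 * n) → (Fin M → Fin n → ℝ) × (Fin M → Fin n → ℝ),
          (∀ i, C i ∈ RTilde M n) ∧ A = ∑ i, C i ∧ ∀ i, ‖C i‖ ≤ Λ * ‖A‖ := by
  haveI : NeZero n := ⟨by omega⟩
  have hone : (1 : Fin n) ≠ 0 := by
    simp [Fin.one_eq_zero_iff]; omega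
  refine ⟨1, one_pos, fun A => ?_⟩
  have hent1 : ∀ i γ, |A.1 i γ| ≤ ‖A‖ := fun i γ => by
    calc |A.1 i γ| = ‖A.1 i γ‖ := (Real.norm_eq_abs _).symm
    _ ≤ ‖A.1 i‖ := norm_le_pi_norm (A.1 i) γ
    _ ≤ ‖A.1‖ := norm_le_pi_norm A.1 i
    _ ≤ ‖A‖ := norm_fst_le A
  have hent2 : ∀ i γ, |A.2 i γ| ≤ ‖A‖ := fun i γ => by
    calc |A.2 i γ| = ‖A.2 i γ‖ := (Real.norm_eq_abs _).symm
    _ ≤ ‖A.2 i‖ := norm_le_pi_norm (A.2 i) γ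
    _ ≤ ‖A.2‖ := norm_le_pi_norm A.2 i
    _ ≤ ‖A‖ := norm_snd_le A
  set T : Fin n → (Fin M → Fin n → ℝ) × (Fin M → Fin n → ℝ) :=
    fun α => (fun i γ => if γ = α then A.1 i α else 0, 0) with hT
  set B : Fin n → (Fin M → Fin n → ℝ) × (Fin M → Fin n → ℝ) :=
    fun α => (0, fun i γ => if γ = α + 1 then A.2 i γ else 0) with hB
  have hDzero : ∀ α : Fin n, ∀ i, (if (α : Fin n) = α + 1 then A.2 i α else 0) = 0 := by
    intro α i
    rw [if_neg]
    simp [left_eq_add, hone]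
  -- membership
  have hTmem : ∀ α, T α ∈ RTilde M n := by
    intro α
    refine ⟨fun i => A.1 i α, fun γ => if γ = α then 1 else 0, 0, by simp, ?_, by simp [hT]⟩
    intro i γ
    simp only [hT]
    split <;> simp
  have hBmem : ∀ α, B α ∈ RTilde M n := by
    intro α
    set D : Fin M → Fin n → ℝ := fun i γ => if γ = α + 1 then A.2 i γ else 0 with hD
    refine ⟨0, fun γ => if γ = α then 1 else 0,
      fun γ β i => if β = α then D i γ else if γ = α then -(D i β) else 0, ?_, by simp [hB], ?_⟩
    · intro γ β
      funext i
      by_cases hb : β = α <;> by_cases hg : γ = α <;>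
        simp [hb, hg, hD]
      · subst hb hg
        rw [if_neg]
        · simp
        omega
    · intro i γ
      simp only [mul_ite, mul_one, mul_zero]
      rw [Finset.sum_ite_eq' Finset.univ α]
      simp [hB, hD]
  -- the family
  have e : Fin n ⊕ Fin n ≃ Fin (2 * n) := finSumFinEquiv.trans (finCongr (two_mul n).symm)
  refine ⟨fun i => Sum.elim T B (e.symm i), ?_, ?_, ?_⟩
  · intro i
    rcases h : e.symm i with α | α <;> simp [h, hTmem, hBmem]
  · have hsum : ∑ i, Sum.elim T B (e.symm i) = (∑ α, T α) + (∑ α, B α) := by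
      rw [Equiv.sum_comp e.symm (Sum.elim T B), Fintype.sum_sum_type]
      simp
    rw [hsum]
    ext i γ
    · simp only [Prod.fst_add, Prod.fst_sum, Finset.sum_apply, Prod.snd_add, hT, hB]
      simp [Finset.sum_ite_eq Finset.univ γ (fun α => A.1 i α)]
    · simp only [Prod.snd_add, Prod.snd_sum, Finset.sum_apply, hT, hB, Pi.add_apply,
        Pi.zero_apply, Finset.sum_const_zero, zero_add]
      have key : ∀ c : Fin n, (if γ = c + 1 then A.2 i γ else 0)
          = (if c = γ - 1 then A.2 i γ else 0) := by
        intro c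
        by_cases h : γ = c + 1
        · rw [if_pos h, if_pos (by rw [h]; exact (add_sub_cancel_right c 1).symm)]
        · rw [if_neg h, if_neg (fun hc => h (by rw [hc]; exact (sub_add_cancel γ 1).symm))]
      symm
      simp only [key]
      rw [Finset.sum_ite_eq' Finset.univ (γ - 1) (fun _ => A.2 i γ)]
      simp
  · intro i
    rw [one_mul]
    rcases h : e.symm i with α | α <;> simp only [h, Sum.elim_inl, Sum.elim_inr]
    · rw [Prod.norm_def]
      refine max_le ?_ (by simp [hT, norm_nonneg])
      rw [pi_norm_le_iff_of_nonneg (norm_nonneg A)]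
      intro j
      rw [pi_norm_le_iff_of_nonneg (norm_nonneg A)]
      intro γ
      simp only [hT, Real.norm_eq_abs]
      split
      · exact hent1 j α
      · simp [norm_nonneg A]
    · rw [Prod.norm_def]
      refine max_le (by simp [hB, norm_nonneg]) ?_
      rw [pi_norm_le_iff_of_nonneg (norm_nonneg A)]
      intro j
      rw [pi_norm_le_iff_of_nonneg (norm_nonneg A)]
      intro γ
      simp only [hB, Real.norm_eq_abs]
      split
      · exact hent2 j γ
      · simp [norm_nonneg A]
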